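/- In LJF, the sequent ↓(∀x. ↑(↓A⁻ ⊗ ↓B⁻(x))) ⊢ ↑(↓A⁻ ⊗ ↓∀u. B⁻(u)) is not derivable. -/
import Mathlib

set_option autoImplicit true

mutual
/-- Negative formulas of focused polarised intuitionistic linear logic LJF,
over term domain `ℕ`; atoms are `natom p args` for predicate symbol `p`. -/
inductive NegF : Type
  | natom : ℕ → List ℕ → NegF
  | lolli : PosF → NegF → NegF
  | all : (ℕ → NegF) → NegF
  | up : PosF → NegF
/-- Positive formulas of LJF. -/
inductive PosF : Type
  | patom : ℕ → List ℕ → PosF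
  | tensor : PosF → PosF → PosF
  | bang : NegF → PosF
  | ex : (ℕ → PosF) → PosF
  | down : NegF → PosF
end

/-- The three judgment forms of LJF: inversion `Γ; Δ ⊢ N`,
left focus `Γ; Δ, [N] ⊢ N'` and right focus `Γ; Δ ⊢ [P]`. -/
inductive LFoc : Type
  | inv : NegF → LFoc
  | left : NegF → NegF → LFoc
  | right : PosF → LFoc

/-- Derivability in LJF (Liang–Miller rules): `LJF Γ Δ J`, with
unrestricted context `Γ` of negative formulas and linear context `Δ`
of positive formulas. -/
inductive LJF : List NegF → Multiset PosF → LFoc → Prop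
  | axNeg : LJF Γ 0 (.left (.natom p ts) (.natom p ts))
  | axPos : LJF Γ {.patom p ts} (.right (.patom p ts))
  | allL : LJF Γ Δ (.left (N t) C) → LJF Γ Δ (.left (.all N) C)
  | allR : (∀ t, LJF Γ Δ (.inv (N t))) → LJF Γ Δ (.inv (.all N))
  | exL : (∀ t, LJF Γ (P t ::ₘ Δ) (.inv C)) → LJF Γ (PosF.ex P ::ₘ Δ) (.inv C)
  | exR : LJF Γ Δ (.right (P t)) → LJF Γ Δ (.right (.ex P))
  | lolliL : LJF Γ Δ₁ (.right P) → LJF Γ Δ₂ (.left N C) →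
      LJF Γ (Δ₁ + Δ₂) (.left (.lolli P N) C)
  | lolliR : LJF Γ (P ::ₘ Δ) (.inv N) → LJF Γ Δ (.inv (.lolli P N))
  | tensorL : LJF Γ (P₁ ::ₘ P₂ ::ₘ Δ) (.inv C) →
      LJF Γ (PosF.tensor P₁ P₂ ::ₘ Δ) (.inv C)
  | tensorR : LJF Γ Δ₁ (.right P₁) → LJF Γ Δ₂ (.right P₂) →
      LJF Γ (Δ₁ + Δ₂) (.right (.tensor P₁ P₂))
  | bangL : LJF (N :: Γ) Δ (.inv C) → LJF Γ (PosF.bang N ::ₘ Δ) (.inv C)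
  | bangR : LJF Γ 0 (.inv N) → LJF Γ 0 (.right (.bang N))
  | copy : N ∈ Γ → LJF Γ Δ (.left N C) → LJF Γ Δ (.inv C)
  | focusL : LJF Γ Δ (.left N C) → LJF Γ (PosF.down N ::ₘ Δ) (.inv C)
  | focusR : LJF Γ Δ (.right P) → LJF Γ Δ (.inv (.up P))
  | blurL : LJF Γ (P ::ₘ Δ) (.inv C) → LJF Γ Δ (.left (.up P) C)
  | blurR : LJF Γ Δ (.inv N) → LJF Γ Δ (.right (.down N))

/- ### A semantic countermodel -/

mutual
/-- Interpretation of negative formulas as sets of resources (`Set ℕ`,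
with union as resource combination). -/
def semN : NegF → Set (Set ℕ)
  | .natom 0 _ => Set.univ
  | .natom (_+1) ts => {S | S = {n | n ∈ ts}}
  | .lolli P N => {S | ∀ T ∈ semP P, S ∪ T ∈ semN N}
  | .all N => {S | ∀ t, S ∈ semN (N t)}
  | .up P => semP P
/-- Interpretation of positive formulas. -/
def semP : PosF → Set (Set ℕ)
  | .patom _ _ => Set.univ
  | .tensor P Q => {S | ∃ T ∈ semP P, ∃ U ∈ semP Q, S = T ∪ U}
  | .bang N => {S | S = ∅ ∧ ∅ ∈ semN N}
  | .ex P => {S | ∃ t, S ∈ semP (P t)}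
  | .down N => semN N
end

/-- Union of a multiset of sets. -/
def mUnion (m : Multiset (Set ℕ)) : Set ℕ := {n | ∃ S ∈ m, n ∈ S}

lemma mUnion_zero : mUnion 0 = ∅ := by
  ext n; simp [mUnion]

lemma mUnion_cons (S : Set ℕ) (m : Multiset (Set ℕ)) :
    mUnion (S ::ₘ m) = S ∪ mUnion m := by
  ext n; simp [mUnion, or_and_right, exists_or]

lemma mUnion_add (m₁ m₂ : Multiset (Set ℕ)) :
    mUnion (m₁ + m₂) = mUnion m₁ ∪ mUnion m₂ := by
  ext n; simp [mUnion, or_and_right, exists_or]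

/-- `S` is a resource realizing the linear context `Δ`. -/
def semΔ (Δ : Multiset PosF) (S : Set ℕ) : Prop :=
  ∃ m, Multiset.Rel (fun P T => T ∈ semP P) Δ m ∧ S = mUnion m

lemma semΔ_zero {S} : semΔ 0 S ↔ S = ∅ := by
  constructor
  · rintro ⟨m, hm, rfl⟩
    rw [Multiset.rel_zero_left] at hm; subst hm; exact mUnion_zero
  · rintro rfl; exact ⟨0, by rw [Multiset.rel_zero_left], mUnion_zero.symm⟩

lemma semΔ_cons {P Δ S} :
    semΔ (P ::ₘ Δ) S ↔ ∃ T U, T ∈ semP P ∧ semΔ Δ U ∧ S = T ∪ U := by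
  constructor
  · rintro ⟨m, hm, rfl⟩
    rw [Multiset.rel_cons_left] at hm
    obtain ⟨T, m', hT, hm', rfl⟩ := hm
    exact ⟨T, mUnion m', hT, ⟨m', hm', rfl⟩, mUnion_cons T m'⟩
  · rintro ⟨T, U, hT, ⟨m, hm, rfl⟩, rfl⟩
    exact ⟨T ::ₘ m, Multiset.rel_cons_left.2 ⟨T, m, hT, hm, rfl⟩,
      (mUnion_cons T m).symm⟩

lemma semΔ_add {Δ₁ Δ₂ S} :
    semΔ (Δ₁ + Δ₂) S ↔ ∃ T U, semΔ Δ₁ T ∧ semΔ Δ₂ U ∧ S = T ∪ U := by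
  constructor
  · rintro ⟨m, hm, rfl⟩
    rw [Multiset.rel_add_left] at hm
    obtain ⟨m₁, m₂, h₁, h₂, rfl⟩ := hm
    exact ⟨mUnion m₁, mUnion m₂, ⟨m₁, h₁, rfl⟩, ⟨m₂, h₂, rfl⟩, mUnion_add m₁ m₂⟩
  · rintro ⟨T, U, ⟨m₁, h₁, rfl⟩, ⟨m₂, h₂, rfl⟩, rfl⟩
    exact ⟨m₁ + m₂, Multiset.rel_add_left.2 ⟨m₁, m₂, h₁, h₂, rfl⟩,
      (mUnion_add m₁ m₂).symm⟩

/-- The unrestricted context is realized at the empty resource. -/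
def goodΓ (Γ : List NegF) : Prop := ∀ G ∈ Γ, ∅ ∈ semN G

/-- Semantic reading of a judgment. -/
def semJ : List NegF → Multiset PosF → LFoc → Prop
  | Γ, Δ, .inv N => ∀ S, goodΓ Γ → semΔ Δ S → S ∈ semN N
  | Γ, Δ, .left N C => ∀ S T, goodΓ Γ → semΔ Δ S → T ∈ semN N → S ∪ T ∈ semN C
  | Γ, Δ, .right P => ∀ S, goodΓ Γ → semΔ Δ S → S ∈ semP P

theorem ljf_sound {Γ Δ J} (h : LJF Γ Δ J) : semJ Γ Δ J := by
  induction h with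
  | axNeg =>
    intro S T hΓ hS hT
    rw [semΔ_zero] at hS; subst hS; simpa using hT
  | axPos =>
    intro S hΓ hS
    rw [show ({PosF.patom _ _} : Multiset PosF) = _ ::ₘ 0 from rfl,
      semΔ_cons] at hS
    simp [semP]
  | allL _ ih =>
    intro S T hΓ hS hT
    exact ih S T hΓ hS (hT _)
  | allR _ ih =>
    intro S hΓ hS t
    exact ih t S hΓ hS
  | exL _ ih =>
    intro S hΓ hS
    rw [semΔ_cons] at hS
    obtain ⟨T, U, hT, hU, rfl⟩ := hS
    obtain ⟨t, hTt⟩ := hT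
    exact ih t (T ∪ U) hΓ (semΔ_cons.2 ⟨T, U, hTt, hU, rfl⟩)
  | exR _ ih =>
    intro S hΓ hS
    exact ⟨_, ih S hΓ hS⟩
  | lolliL _ _ ih₁ ih₂ =>
    intro S T hΓ hS hT
    rw [semΔ_add] at hS
    obtain ⟨S₁, S₂, h₁, h₂, rfl⟩ := hS
    have := ih₂ S₂ (T ∪ S₁) hΓ h₂ (hT S₁ (ih₁ S₁ hΓ h₁))
    have e : S₁ ∪ S₂ ∪ T = S₂ ∪ (T ∪ S₁) := by
      ext n; simp; tauto
    rwa [e]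
  | lolliR _ ih =>
    intro S hΓ hS T hT
    exact ih (S ∪ T) hΓ (semΔ_cons.2 ⟨T, S, hT, hS, Set.union_comm S T⟩)
  | tensorL _ ih =>
    intro S hΓ hS
    rw [semΔ_cons] at hS
    obtain ⟨T, U, hT, hU, rfl⟩ := hS
    obtain ⟨T₁, h₁, T₂, h₂, rfl⟩ := hT
    refine ih (T₁ ∪ T₂ ∪ U) hΓ (semΔ_cons.2 ⟨T₁, T₂ ∪ U, h₁,
      semΔ_cons.2 ⟨T₂, U, h₂, hU, rfl⟩, ?_⟩)
    ext n; simp; tauto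
  | tensorR _ _ ih₁ ih₂ =>
    intro S hΓ hS
    rw [semΔ_add] at hS
    obtain ⟨S₁, S₂, h₁, h₂, rfl⟩ := hS
    exact ⟨S₁, ih₁ S₁ hΓ h₁, S₂, ih₂ S₂ hΓ h₂, rfl⟩
  | bangL _ ih =>
    intro S hΓ hS
    rw [semΔ_cons] at hS
    obtain ⟨T, U, hT, hU, rfl⟩ := hS
    obtain ⟨rfl, hN⟩ := hT
    rw [Set.empty_union]
    refine ih U ?_ hU
    intro G hG
    rcases List.mem_cons.1 hG with rfl | hG
    · exact hN
    · exact hΓ G hG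
  | bangR _ ih =>
    intro S hΓ hS
    rw [semΔ_zero] at hS; subst hS
    exact ⟨rfl, ih ∅ hΓ (semΔ_zero.2 rfl)⟩
  | copy hmem _ ih =>
    intro S hΓ hS
    simpa using ih S ∅ hΓ hS (hΓ _ hmem)
  | focusL _ ih =>
    intro S hΓ hS
    rw [semΔ_cons] at hS
    obtain ⟨T, U, hT, hU, rfl⟩ := hS
    rw [Set.union_comm]
    exact ih U T hΓ hU hT
  | focusR _ ih => exact ih
  | blurL _ ih =>
    intro S T hΓ hS hT
    exact ih (S ∪ T) hΓ (semΔ_cons.2 ⟨T, S, hT, hS, Set.union_comm S T⟩)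
  | blurR _ ih => exact ih

/-- The sequent `↓(∀x. ↑(↓A⁻ ⊗ ↓B⁻(x))) ⊢ ↑(↓A⁻ ⊗ ↓∀u. B⁻(u))` is not
derivable in LJF (with the nullary negative atom `A⁻ = natom 0 []` and
the unary negative atom `B⁻ = natom 1`). -/
theorem stmt4 :
    ¬ LJF []
        {PosF.down (.all fun x =>
          .up (.tensor (.down (.natom 0 [])) (.down (.natom 1 [x]))))}
        (.inv (.up (.tensor (.down (.natom 0 []))
          (.down (.all fun u => .natom 1 [u]))))) := by
  intro h
  have hs := ljf_sound h
  have hΓ : goodΓ [] := by intro G hG; simp at hG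
  have hhyp : (Set.univ : Set ℕ) ∈ semN (.all fun x =>
      .up (.tensor (.down (.natom 0 [])) (.down (.natom 1 [x])))) := by
    intro t
    exact ⟨Set.univ, by simp [semN, semP], {n | n ∈ [t]}, by simp [semN, semP],
      (Set.univ_union _).symm⟩
  have hS : semΔ {PosF.down (.all fun x =>
      .up (.tensor (.down (.natom 0 [])) (.down (.natom 1 [x]))))}
      Set.univ := by
    refine semΔ_cons.2 ⟨Set.univ, ∅, ?_, semΔ_zero.2 rfl, by simp⟩
    exact hhyp
  have := hs Set.univ hΓ hS
  obtain ⟨T, hT, U, hU, hTU⟩ := this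
  have h0 : U = {n | n ∈ [(0:ℕ)]} := hU 0
  have h1 : U = {n | n ∈ [(1:ℕ)]} := hU 1
  have : (0:ℕ) ∈ U := by rw [h0]; simp
  rw [h1] at this
  simp only [Set.mem_setOf_eq, List.mem_singleton] at this
  exact absurd this (by norm_num)
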